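/- If lim_{n→∞} E[X̄_n] = μ with μ ≠ S and lim_{n→∞} Var[X̄_n] = 0, then lim_{n→∞} P_e^{(n)} = 0. -/

import Mathlib

open MeasureTheory Filter Real ProbabilityTheory


noncomputable def pmV (n : ℕ) : Finset (Fin n → ℝ) := Fintype.piFinset (fun _ => ({1, -1} : Finset ℝ))

lemma mem_pmV {n : ℕ} {x : Fin n → ℝ} (hx : ∀ i, x i = 1 ∨ x i = -1) : x ∈ pmV n := by
  simp only [pmV, Fintype.mem_piFinset, Finset.mem_insert, Finset.mem_singleton]
  exact hx

lemma pmV_vals {n : ℕ} {x : Fin n → ℝ} (hx : x ∈ pmV n) : ∀ i, x i = 1 ∨ x i = -1 := by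
  simpa only [pmV, Fintype.mem_piFinset, Finset.mem_insert, Finset.mem_singleton] using hx

lemma integral_atoms {Ω : Type*} [MeasurableSpace Ω] (P : Measure Ω) [IsProbabilityMeasure P]
    {n : ℕ} (X Y : Ω → Fin n → ℝ)
    (hXval : ∀ ω i, X ω i = 1 ∨ X ω i = -1) (hYval : ∀ ω i, Y ω i = 1 ∨ Y ω i = -1)
    (hXmeas : Measurable X) (hYmeas : Measurable Y)
    (f : (Fin n → ℝ) → (Fin n → ℝ) → ℝ) :
    ∫ ω, f (X ω) (Y ω) ∂P
      = ∑ x ∈ pmV n, ∑ y ∈ pmV n, f x y * (P {ω | X ω = x ∧ Y ω = y}).toReal := by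
  have hmeas : ∀ (x y : Fin n → ℝ), MeasurableSet {ω | X ω = x ∧ Y ω = y} := by
    intro x y
    have : {ω | X ω = x ∧ Y ω = y} = X ⁻¹' {x} ∩ Y ⁻¹' {y} := by
      ext ω; simp [Set.mem_preimage]
    rw [this]
    exact (hXmeas (measurableSet_singleton x)).inter (hYmeas (measurableSet_singleton y))
  have key : ∀ ω, f (X ω) (Y ω)
      = ∑ x ∈ pmV n, ∑ y ∈ pmV n,
          Set.indicator {ω' | X ω' = x ∧ Y ω' = y} (fun _ => f x y) ω := by
    intro ω
    rw [Finset.sum_eq_single (X ω)]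
    · rw [Finset.sum_eq_single (Y ω)]
      · rw [Set.indicator_of_mem (by exact ⟨rfl, rfl⟩)]
      · intro y _ hne
        exact Set.indicator_of_notMem (fun h => hne h.2.symm) _
      · intro h; exact absurd (mem_pmV (hYval ω)) h
    · intro x _ hne
      refine Finset.sum_eq_zero fun y _ => ?_
      exact Set.indicator_of_notMem (fun h => hne h.1.symm) _
    · intro h; exact absurd (mem_pmV (hXval ω)) h
  have hint : ∀ (x y : Fin n → ℝ),
      Integrable (Set.indicator {ω' | X ω' = x ∧ Y ω' = y} (fun _ => f x y)) P :=
    fun x y => (integrable_const _).indicator (hmeas x y)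
  calc ∫ ω, f (X ω) (Y ω) ∂P
      = ∫ ω, ∑ x ∈ pmV n, ∑ y ∈ pmV n,
          Set.indicator {ω' | X ω' = x ∧ Y ω' = y} (fun _ => f x y) ω ∂P := by
        simp_rw [key]
    _ = ∑ x ∈ pmV n, ∑ y ∈ pmV n, f x y * (P {ω | X ω = x ∧ Y ω = y}).toReal := by
        rw [integral_finset_sum _ fun x _ => integrable_finset_sum _ fun y _ => hint x y]
        refine Finset.sum_congr rfl fun x _ => ?_
        rw [integral_finset_sum _ fun y _ => hint x y]
        refine Finset.sum_congr rfl fun y _ => ?_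
        rw [integral_indicator_const _ (hmeas x y), smul_eq_mul, mul_comm]; rfl

lemma inner_zero {n : ℕ} (p : ℝ) (x : Fin n → ℝ) (hx : ∀ i, x i = 1 ∨ x i = -1)
    (i j : Fin n) (hij : i ≠ j) :
    ∑ y ∈ pmV n, (y i - (1 - 2*p) * x i) * (y j - (1 - 2*p) * x j)
        * ∏ k, (if y k = x k then 1 - p else p) = 0 := by
  set g : Fin n → ℝ → ℝ := fun k t => (if t = x k then 1 - p else p) *
    (if k = i then t - (1 - 2*p) * x i else if k = j then t - (1 - 2*p) * x j else 1) with hg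
  have hprod : ∀ y : Fin n → ℝ,
      ∏ k, (if k = i then y k - (1 - 2*p) * x i
            else if k = j then y k - (1 - 2*p) * x j else (1:ℝ))
        = (y i - (1 - 2*p) * x i) * (y j - (1 - 2*p) * x j) := by
    intro y
    rw [← Finset.mul_prod_erase Finset.univ _ (Finset.mem_univ i), if_pos rfl,
        ← Finset.mul_prod_erase _ _ (Finset.mem_erase.mpr ⟨hij.symm, Finset.mem_univ j⟩),
        if_neg hij.symm, if_pos rfl, Finset.prod_eq_one, mul_one]
    intro k hk
    have hk1 : k ≠ j := (Finset.mem_erase.mp hk).1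
    have hk2 : k ≠ i := (Finset.mem_erase.mp (Finset.mem_erase.mp hk).2).1
    rw [if_neg hk2, if_neg hk1]
  have step : ∀ y ∈ pmV n,
      (y i - (1 - 2*p) * x i) * (y j - (1 - 2*p) * x j)
        * ∏ k, (if y k = x k then 1 - p else p) = ∏ k, g k (y k) := by
    intro y _
    simp only [hg]
    rw [Finset.prod_mul_distrib, hprod y]
    ring
  rw [Finset.sum_congr rfl step]
  have : ∑ y ∈ pmV n, ∏ k, g k (y k) = ∏ k, ∑ t ∈ ({1, -1} : Finset ℝ), g k t := by
    rw [pmV, ← Finset.prod_univ_sum]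
  rw [this]
  apply Finset.prod_eq_zero (Finset.mem_univ i)
  rw [Finset.sum_pair (by norm_num : (1:ℝ) ≠ -1)]
  simp only [hg, if_pos rfl]
  rcases hx i with h | h <;> rw [h] <;> norm_num <;> ring

lemma cross_zero {Ω : Type*} [MeasurableSpace Ω] (P : Measure Ω) [IsProbabilityMeasure P]
    (p : ℝ) {n : ℕ} (X Y : Ω → Fin n → ℝ)
    (hXval : ∀ ω i, X ω i = 1 ∨ X ω i = -1) (hYval : ∀ ω i, Y ω i = 1 ∨ Y ω i = -1)
    (hXmeas : Measurable X) (hYmeas : Measurable Y)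
    (hjoint : ∀ (x y : Fin n → ℝ), (∀ i, x i = 1 ∨ x i = -1) → (∀ i, y i = 1 ∨ y i = -1) →
      (P {ω | X ω = x ∧ Y ω = y}).toReal
        = (P {ω | X ω = x}).toReal * ∏ i, (if y i = x i then 1 - p else p))
    (i j : Fin n) (hij : i ≠ j) :
    ∫ ω, (Y ω i - (1 - 2*p) * X ω i) * (Y ω j - (1 - 2*p) * X ω j) ∂P = 0 := by
  rw [integral_atoms P X Y hXval hYval hXmeas hYmeas
    (fun x y => (y i - (1 - 2*p) * x i) * (y j - (1 - 2*p) * x j))]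
  refine Finset.sum_eq_zero fun x hx => ?_
  have hx' := pmV_vals hx
  have step : ∀ y ∈ pmV n,
      (y i - (1 - 2*p) * x i) * (y j - (1 - 2*p) * x j) * (P {ω | X ω = x ∧ Y ω = y}).toReal
        = (P {ω | X ω = x}).toReal *
            ((y i - (1 - 2*p) * x i) * (y j - (1 - 2*p) * x j)
              * ∏ k, (if y k = x k then 1 - p else p)) := by
    intro y hy
    rw [hjoint x y hx' (pmV_vals hy)]
    ring
  rw [Finset.sum_congr rfl step, ← Finset.mul_sum, inner_zero p x hx' i j hij, mul_zero]

lemma int_of_bd {Ω : Type*} [MeasurableSpace Ω] (P : Measure Ω) [IsProbabilityMeasure P]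
    {f : Ω → ℝ} (hm : Measurable f) (C : ℝ) (hb : ∀ ω, |f ω| ≤ C) : Integrable f P :=
  Integrable.mono' (integrable_const C) hm.aestronglyMeasurable
    (ae_of_all _ fun ω => by simpa [Real.norm_eq_abs] using hb ω)

lemma W_sq_bound {Ω : Type*} [MeasurableSpace Ω] (P : Measure Ω) [IsProbabilityMeasure P]
    (p : ℝ) (hp0 : 0 < p) (hp1 : p < 1/2) {n : ℕ} (hn : 1 ≤ n) (X Y : Ω → Fin n → ℝ)
    (hXval : ∀ ω i, X ω i = 1 ∨ X ω i = -1) (hYval : ∀ ω i, Y ω i = 1 ∨ Y ω i = -1)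
    (hXmeas : Measurable X) (hYmeas : Measurable Y)
    (hjoint : ∀ (x y : Fin n → ℝ), (∀ i, x i = 1 ∨ x i = -1) → (∀ i, y i = 1 ∨ y i = -1) →
      (P {ω | X ω = x ∧ Y ω = y}).toReal
        = (P {ω | X ω = x}).toReal * ∏ i, (if y i = x i then 1 - p else p)) :
    ∫ ω, ((∑ i, (Y ω i - (1 - 2*p) * X ω i)) / n)^2 ∂P ≤ 4 / n := by
  set w : Fin n → Ω → ℝ := fun i ω => Y ω i - (1 - 2*p) * X ω i with hw
  have hwmeas : ∀ i, Measurable (w i) := fun i =>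
    ((measurable_pi_apply i).comp hYmeas).sub
      (((measurable_pi_apply i).comp hXmeas).const_mul _)
  have hwbd : ∀ i ω, |w i ω| ≤ 2 := by
    intro i ω
    rcases hYval ω i with h | h <;> rcases hXval ω i with h' | h' <;>
      simp only [hw, h, h'] <;> rw [abs_le] <;> constructor <;> nlinarith
  have hint : ∀ i j, Integrable (fun ω => w i ω * w j ω) P := by
    intro i j
    exact int_of_bd P ((hwmeas i).mul (hwmeas j)) 4 fun ω => by
      rw [abs_mul]; nlinarith [hwbd i ω, hwbd j ω, abs_nonneg (w i ω), abs_nonneg (w j ω)]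
  have hnpos : (0:ℝ) < n := by exact_mod_cast hn
  have expand : ∀ ω, ((∑ i, w i ω) / n)^2 = (∑ i, ∑ j, w i ω * w j ω) / (n^2 : ℝ) := by
    intro ω
    rw [div_pow, pow_two, Finset.sum_mul_sum]
  calc ∫ ω, ((∑ i, w i ω) / n)^2 ∂P
      = (∫ ω, ∑ i, ∑ j, w i ω * w j ω ∂P) / (n^2 : ℝ) := by
        simp_rw [expand]; rw [integral_div]
    _ = (∑ i, ∑ j, ∫ ω, w i ω * w j ω ∂P) / (n^2 : ℝ) := by
        rw [integral_finset_sum _ fun i _ => integrable_finset_sum _ fun j _ => hint i j]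
        congr 1
        exact Finset.sum_congr rfl fun i _ => integral_finset_sum _ fun j _ => hint i j
    _ = (∑ i, ∫ ω, w i ω * w i ω ∂P) / (n^2 : ℝ) := by
        congr 1
        refine Finset.sum_congr rfl fun i _ => ?_
        rw [Finset.sum_eq_single i]
        · intro j _ hji
          exact cross_zero P p X Y hXval hYval hXmeas hYmeas hjoint i j hji.symm
        · intro h; exact absurd (Finset.mem_univ i) h
    _ ≤ (∑ _i : Fin n, (4:ℝ)) / (n^2 : ℝ) := by
        apply div_le_div_of_nonneg_right ?_ (by positivity)
        apply Finset.sum_le_sum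
        intro i _
        calc ∫ ω, w i ω * w i ω ∂P ≤ ∫ _ω, (4:ℝ) ∂P := ?_
          _ = 4 := by simp
        apply integral_mono (hint i i) (integrable_const 4)
        intro ω
        show w i ω * w i ω ≤ 4
        nlinarith [hwbd i ω, abs_nonneg (w i ω), sq_abs (w i ω)]
    _ = 4 / n := by
        rw [Finset.sum_const, Finset.card_univ, Fintype.card_fin, nsmul_eq_mul]
        field_simp


set_option maxHeartbeats 1000000 in
/-- In the sentiment detection model, if `lim_{n→∞} E[X̄_n] = μ ≠ S` and
`lim_{n→∞} Var[X̄_n] = 0`, then `lim_{n→∞} P_e^{(n)} = 0`. -/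
theorem supermajority_error_zero_of_mean_var
    {Ω : Type*} [MeasurableSpace Ω] (P : Measure Ω) [IsProbabilityMeasure P]
    (p S : ℝ) (hp0 : 0 < p) (hp1 : p < 1 / 2) (hS0 : -1 < S) (hS1 : S < 1)
    (X Y : (n : ℕ) → Ω → Fin n → ℝ)
    (hXval : ∀ n ω i, X n ω i = 1 ∨ X n ω i = -1)
    (hYval : ∀ n ω i, Y n ω i = 1 ∨ Y n ω i = -1)
    (hXmeas : ∀ n, Measurable (X n))
    (hYmeas : ∀ n, Measurable (Y n))
    (hjoint : ∀ n (x y : Fin n → ℝ), (∀ i, x i = 1 ∨ x i = -1) →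
      (∀ i, y i = 1 ∨ y i = -1) →
      (P {ω | X n ω = x ∧ Y n ω = y}).toReal
        = (P {ω | X n ω = x}).toReal * ∏ i, (if y i = x i then 1 - p else p))
    (μ : ℝ) (hμS : μ ≠ S)
    (hmean : Tendsto (fun n : ℕ => ∫ ω, (∑ i, X n ω i) / n ∂P) atTop (nhds μ))
    (hvar : Tendsto (fun n : ℕ => variance (fun ω => (∑ i, X n ω i) / n) P) atTop (nhds 0)) :
    Tendsto (fun n : ℕ =>
        (P {ω | ((∑ i, X n ω i) / n - S) * ((∑ i, Y n ω i) / n - (1 - 2 * p) * S) < 0}).toReal)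
      atTop (nhds 0) := by
  have hd : μ - S ≠ 0 := sub_ne_zero.mpr hμS
  have hdpos : 0 < |μ - S| := abs_pos.mpr hd
  have hc : 0 < 1 - 2*p := by linarith
  set d : ℝ := |μ - S| with hdd
  set ε : ℝ := d / 2 with hεd
  set δ : ℝ := (1 - 2*p) * d / 4 with hδd
  have hεpos : 0 < ε := by positivity
  have hδpos : 0 < δ := by positivity
  set g : ℕ → ℝ := fun n => (P {ω | ε ≤ |(∑ i, X n ω i) / (n:ℝ) - μ|}).toReal with hgd
  set h : ℕ → ℝ :=
    fun n => (P {ω | δ ≤ |(∑ i, (Y n ω i - (1 - 2*p) * X n ω i)) / (n:ℝ)|}).toReal with hhd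
  -- event inclusion
  have hsub : ∀ n : ℕ,
      {ω | ((∑ i, X n ω i) / (n:ℝ) - S) * ((∑ i, Y n ω i) / (n:ℝ) - (1 - 2 * p) * S) < 0}
        ⊆ {ω | ε ≤ |(∑ i, X n ω i) / (n:ℝ) - μ|}
          ∪ {ω | δ ≤ |(∑ i, (Y n ω i - (1 - 2*p) * X n ω i)) / (n:ℝ)|} := by
    intro n ω hω
    by_contra hcon
    rw [Set.mem_union] at hcon
    push_neg at hcon
    obtain ⟨h1, h2⟩ := hcon
    simp only [Set.mem_setOf_eq, not_le] at h1 h2 hω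
    have hrel : (∑ i, (Y n ω i - (1 - 2*p) * X n ω i)) / (n:ℝ)
        = (∑ i, Y n ω i) / (n:ℝ) - (1 - 2*p) * ((∑ i, X n ω i) / (n:ℝ)) := by
      rw [Finset.sum_sub_distrib, ← Finset.mul_sum, sub_div, mul_div_assoc]
    rw [hrel] at h2
    set u : ℝ := (∑ i, X n ω i) / (n:ℝ)
    set v : ℝ := (∑ i, Y n ω i) / (n:ℝ)
    rw [abs_lt] at h1 h2
    rcases hd.lt_or_gt with hlt | hlt
    · -- μ < S, d = S - μ
      have hd' : d = S - μ := by rw [hdd, abs_of_neg hlt]; ring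
      have hu : u - S < 0 := by
        have := h1.2; rw [hεd, hd'] at this; linarith
      have hu' : u - S < -(d/2) := by
        have := h1.2; rw [hεd] at this; linarith [hd'.symm.le]
      have hmul := mul_lt_mul_of_pos_left hu' hc
      have hv : v - (1 - 2*p) * S < 0 := by
        have h22 := h2.2
        rw [hδd] at h22
        nlinarith [hmul, hdpos]
      exact absurd hω (not_lt.mpr (mul_pos_of_neg_of_neg hu hv).le)
    · -- S < μ, d = μ - S
      have hd' : d = μ - S := by rw [hdd, abs_of_pos hlt]
      have hu : 0 < u - S := by
        have := h1.1; rw [hεd, hd'] at this; linarith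
      have hu' : d/2 < u - S := by
        have := h1.1; rw [hεd, hd'] at this; linarith
      have hmul := mul_lt_mul_of_pos_left hu' hc
      have hv : 0 < v - (1 - 2*p) * S := by
        have h21 := h2.1
        rw [hδd] at h21
        nlinarith [hmul, hdpos]
      exact absurd hω (not_lt.mpr (mul_pos hu hv).le)
  -- pointwise bound on the error probability
  have hfg : ∀ n : ℕ,
      (P {ω | ((∑ i, X n ω i) / (n:ℝ) - S) * ((∑ i, Y n ω i) / (n:ℝ) - (1 - 2 * p) * S) < 0}).toReal
        ≤ g n + h n := by
    intro n
    calc (P _).toReal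
        ≤ (P ({ω | ε ≤ |(∑ i, X n ω i) / (n:ℝ) - μ|}
            ∪ {ω | δ ≤ |(∑ i, (Y n ω i - (1 - 2*p) * X n ω i)) / (n:ℝ)|})).toReal :=
          ENNReal.toReal_mono (measure_ne_top _ _) (measure_mono (hsub n))
      _ ≤ (P {ω | ε ≤ |(∑ i, X n ω i) / (n:ℝ) - μ|}
            + P {ω | δ ≤ |(∑ i, (Y n ω i - (1 - 2*p) * X n ω i)) / (n:ℝ)|}).toReal :=
          ENNReal.toReal_mono
            (ENNReal.add_ne_top.mpr ⟨measure_ne_top _ _, measure_ne_top _ _⟩)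
            (measure_union_le _ _)
      _ = g n + h n := ENNReal.toReal_add (measure_ne_top _ _) (measure_ne_top _ _)
  -- g → 0
  have hg : Tendsto g atTop (nhds 0) := by
    have hvar' : Tendsto
        (fun n : ℕ => variance (fun ω => (∑ i, X n ω i) / (n:ℝ)) P / (ε/2)^2)
        atTop (nhds 0) := by
      simpa using hvar.div_const ((ε/2)^2)
    refine squeeze_zero' (Eventually.of_forall fun n => ENNReal.toReal_nonneg) ?_ hvar'
    obtain ⟨N, hN⟩ := Metric.tendsto_atTop.mp hmean (ε/2) (by positivity)
    filter_upwards [eventually_ge_atTop N] with n hn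
    have hmn : |(∫ ω, (∑ i, X n ω i) / (n:ℝ) ∂P) - μ| < ε/2 := by
      have := hN n hn; rwa [Real.dist_eq] at this
    have hAmeas : Measurable (fun ω => (∑ i, X n ω i) / (n:ℝ)) :=
      (Finset.measurable_sum Finset.univ
        (fun i _ => (measurable_pi_apply i).comp (hXmeas n))).div_const _
    have hAbd : ∀ ω, |(∑ i, X n ω i) / (n:ℝ)| ≤ 1 := by
      intro ω
      rcases Nat.eq_zero_or_pos n with h0 | hpos
      · subst h0; simp
      · have hnp : (0:ℝ) < n := by exact_mod_cast hpos
        have h1 : |∑ i, X n ω i| ≤ ∑ _i : Fin n, (1:ℝ) :=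
          (Finset.abs_sum_le_sum_abs _ _).trans
            (Finset.sum_le_sum fun i _ => by rcases hXval n ω i with h | h <;> simp [h])
        rw [abs_div, abs_of_nonneg hnp.le, div_le_one hnp]
        simpa using h1
    have hmem : MemLp (fun ω => (∑ i, X n ω i) / (n:ℝ)) 2 P :=
      MemLp.of_bound hAmeas.aestronglyMeasurable 1
        (ae_of_all _ fun ω => by rw [Real.norm_eq_abs]; exact hAbd ω)
    have cheb := meas_ge_le_variance_div_sq (μ := P) hmem (show (0:ℝ) < ε/2 by positivity)
    have hsub2 : {ω | ε ≤ |(∑ i, X n ω i) / (n:ℝ) - μ|}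
        ⊆ {ω | ε/2 ≤ |(∑ i, X n ω i) / (n:ℝ) - ∫ ω', (∑ i, X n ω' i) / (n:ℝ) ∂P|} := by
      intro ω hω
      simp only [Set.mem_setOf_eq] at hω ⊢
      have habs := abs_sub_le ((∑ i, X n ω i) / (n:ℝ))
        (∫ ω', (∑ i, X n ω' i) / (n:ℝ) ∂P) μ
      linarith
    calc g n ≤ (P {ω | ε/2 ≤ |(∑ i, X n ω i) / (n:ℝ)
            - ∫ ω', (∑ i, X n ω' i) / (n:ℝ) ∂P|}).toReal :=
          ENNReal.toReal_mono (measure_ne_top _ _) (measure_mono hsub2)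
      _ ≤ (ENNReal.ofReal (variance (fun ω => (∑ i, X n ω i) / (n:ℝ)) P / (ε/2)^2)).toReal :=
          ENNReal.toReal_mono ENNReal.ofReal_ne_top cheb
      _ = variance (fun ω => (∑ i, X n ω i) / (n:ℝ)) P / (ε/2)^2 :=
          ENNReal.toReal_ofReal (div_nonneg (variance_nonneg _ _) (by positivity))
  -- h → 0
  have hh : Tendsto h atTop (nhds 0) := by
    refine squeeze_zero' (Eventually.of_forall fun n => ENNReal.toReal_nonneg) ?_
      (tendsto_const_div_atTop_nhds_zero_nat (4/δ^2))
    filter_upwards [eventually_ge_atTop 1] with n hn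
    have hnp : (0:ℝ) < n := by exact_mod_cast hn
    set W : Ω → ℝ := fun ω => (∑ i, (Y n ω i - (1 - 2*p) * X n ω i)) / (n:ℝ) with hWd
    have hWmeas : Measurable W := by
      apply Measurable.div_const
      exact Finset.measurable_sum Finset.univ fun i _ =>
        ((measurable_pi_apply i).comp (hYmeas n)).sub
          (((measurable_pi_apply i).comp (hXmeas n)).const_mul _)
    have hWbd : ∀ ω, |W ω| ≤ 2 := by
      intro ω
      have h1 : |∑ i, (Y n ω i - (1 - 2*p) * X n ω i)| ≤ ∑ _i : Fin n, (2:ℝ) :=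
        (Finset.abs_sum_le_sum_abs _ _).trans (Finset.sum_le_sum fun i _ => by
          rcases hYval n ω i with h | h <;> rcases hXval n ω i with h' | h' <;>
            rw [h, h', abs_le] <;> constructor <;> nlinarith)
      rw [hWd]
      rw [abs_div, abs_of_nonneg hnp.le, div_le_iff₀ hnp]
      simp only [Finset.sum_const, Finset.card_univ, Fintype.card_fin, nsmul_eq_mul] at h1
      linarith
    have hWint : Integrable (fun ω => (W ω)^2) P :=
      int_of_bd P (hWmeas.pow_const 2) 4 fun ω => by
        rw [abs_of_nonneg (sq_nonneg _)]
        nlinarith [hWbd ω, abs_nonneg (W ω), sq_abs (W ω)]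
    have markov := mul_meas_ge_le_integral_of_nonneg
      (ae_of_all P fun ω => sq_nonneg (W ω)) hWint (δ^2)
    have hseteq : {ω | δ ≤ |W ω|} = {ω | δ^2 ≤ (W ω)^2} := by
      ext ω
      simp only [Set.mem_setOf_eq]
      constructor <;> intro hw <;> nlinarith [abs_nonneg (W ω), sq_abs (W ω)]
    have hb := W_sq_bound P p hp0 hp1 hn (X n) (Y n) (hXval n) (hYval n)
      (hXmeas n) (hYmeas n) (hjoint n)
    have hW2 : ∫ ω, (W ω)^2 ∂P ≤ 4 / n := hb
    have hδ2 : (0:ℝ) < δ^2 := by positivity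
    have h3 : (P {ω | δ^2 ≤ (W ω)^2}).toReal * δ^2 ≤ 4 / n := by
      rw [mul_comm]; exact markov.trans hW2
    calc h n = (P {ω | δ ≤ |W ω|}).toReal := rfl
      _ = (P {ω | δ^2 ≤ (W ω)^2}).toReal := by rw [hseteq]
      _ ≤ (4 / n) / δ^2 := (le_div_iff₀ hδ2).mpr h3
      _ = 4 / δ^2 / (n:ℝ) := div_right_comm 4 _ _
  refine squeeze_zero (fun n => ENNReal.toReal_nonneg) hfg ?_
  simpa using hg.add hh
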